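/- For the explicit geodesic φ_t = (V/4π)(log((1+e^{4t}|z|²)/(1+|z|²)) − 2t) on ℙ¹ with ω₀ = (V/2π)ω_FS, the functional J(φ) = ∫ φ ω₀ − (1/2)∫ φ(ω₀ + ω_φ) satisfies (d²/dt²) J(φ_t) = (V/2π)² ∫_ℂ 8 e^{4t}|z|²/((1+e^{4t}|z|²)²) · i dz∧dz̄/(1+|z|²)² > 0, and the asymptotic slope is lim_{t→∞} (d/dt)J(φ_t) = V²/(2π). -/

import Mathlib

open MeasureTheory Filter

/-- The explicit geodesic potential `φ_t(z)` on `ℙ¹` (affine chart `z ∈ ℂ`). -/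
noncomputable def phiRay (V t : ℝ) (z : ℂ) : ℝ :=
  (V / (4 * Real.pi)) *
    (Real.log ((1 + Real.exp (4 * t) * Complex.normSq z) / (1 + Complex.normSq z)) - 2 * t)

/-- Density of `ω₀ = (V/2π)ω_FS` with respect to Lebesgue measure on `ℂ`
(recall `i dz∧dz̄ = 2 dA`). -/
noncomputable def omegaZeroDensity (V : ℝ) (z : ℂ) : ℝ :=
  (V / Real.pi) / (1 + Complex.normSq z) ^ 2

/-- Density of `ω_t = ω₀ + 2i∂∂̄φ_t = σ_t^*ω₀` with respect to Lebesgue measure on `ℂ`. -/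
noncomputable def omegaTDensity (V t : ℝ) (z : ℂ) : ℝ :=
  (V / Real.pi) * Real.exp (4 * t) / (1 + Real.exp (4 * t) * Complex.normSq z) ^ 2

/-- The functional `J(φ) = ∫ φ ω₀ − (1/2)∫ φ(ω₀ + ω_φ)` evaluated along the geodesic ray. -/
noncomputable def Jray (V t : ℝ) : ℝ :=
  (∫ z : ℂ, phiRay V t z * omegaZeroDensity V z) -
    (1 / 2) * ∫ z : ℂ, phiRay V t z * (omegaZeroDensity V z + omegaTDensity V t z)

section AuxProofs
open Set


lemma sq_image_Ioi : (fun x : ℝ => x ^ 2) '' Set.Ioi 0 = Set.Ioi 0 := by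
  ext y
  constructor
  · rintro ⟨x, hx, rfl⟩; exact pow_pos (Set.mem_Ioi.1 hx) 2
  · intro hy
    exact ⟨Real.sqrt y, Real.sqrt_pos.2 hy, Real.sq_sqrt hy.le⟩

lemma integral_complex_radial (g : ℝ → ℝ) :
    (∫ z : ℂ, g (Complex.normSq z)) = Real.pi * ∫ s in Set.Ioi (0:ℝ), g s := by
  rw [← Complex.integral_comp_polarCoord_symm]
  have h1 : ∀ p : ℝ × ℝ, Complex.normSq (Complex.polarCoord.symm p) = p.1 ^ 2 := by
    intro p
    rw [← Complex.sq_norm, Complex.norm_polarCoord_symm, sq_abs]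
  have : (∫ p in polarCoord.target, p.1 • g (Complex.normSq (Complex.polarCoord.symm p)))
      = ∫ p in polarCoord.target, (fun x => x * g (x ^ 2)) p.1 * (fun _ : ℝ => (1:ℝ)) p.2 := by
    congr 1
    funext p
    rw [h1 p, smul_eq_mul]
    simp
  rw [this]
  have htarget : polarCoord.target = Set.Ioi (0:ℝ) ×ˢ Set.Ioo (-Real.pi) Real.pi := rfl
  have h5 := MeasureTheory.setIntegral_prod_mul (μ := (volume : Measure ℝ))
    (ν := (volume : Measure ℝ)) (fun x : ℝ => x * g (x ^ 2)) (fun _ : ℝ => (1:ℝ))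
    (Set.Ioi 0) (Set.Ioo (-Real.pi) Real.pi)
  rw [htarget, Measure.volume_eq_prod, h5]
  have h2 : (∫ _ in Set.Ioo (-Real.pi) Real.pi, (1:ℝ)) = 2 * Real.pi := by
    simp [Real.volume_Ioo]
    rw [max_eq_left (by positivity)]
    ring
  rw [h2]
  have h3 : (∫ s in Set.Ioi (0:ℝ), g s) = ∫ x in Set.Ioi (0:ℝ), |2 * x| • g (x ^ 2) := by
    conv_lhs => rw [← sq_image_Ioi]
    exact integral_image_eq_integral_abs_deriv_smul measurableSet_Ioi
      (fun x _ => by simpa using (hasDerivAt_pow 2 x).hasDerivWithinAt)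
      (fun x hx y hy hxy => by
        have hx' : (0:ℝ) < x := hx
        have hy' : (0:ℝ) < y := hy
        nlinarith) g
  have h4 : (∫ x in Set.Ioi (0:ℝ), |2 * x| • g (x ^ 2)) = 2 * ∫ x in Set.Ioi (0:ℝ), x * g (x ^ 2) := by
    rw [← MeasureTheory.integral_const_mul]
    refine setIntegral_congr_fun measurableSet_Ioi (fun x hx => ?_)
    have : (0:ℝ) < x := hx
    rw [abs_of_pos (by linarith), smul_eq_mul]
    ring
  rw [h4] at h3
  rw [h3]
  ring

lemma ftc_nonneg {G q : ℝ → ℝ} {m : ℝ}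
    (hd : ∀ x ∈ Set.Ici (0:ℝ), HasDerivAt G (q x) x)
    (hs : ∀ x ∈ Set.Ioi (0:ℝ), 0 ≤ q x)
    (hm : Tendsto G atTop (nhds m)) :
    IntegrableOn q (Set.Ioi 0) ∧ (∫ x in Set.Ioi (0:ℝ), q x) = m - G 0 :=
  ⟨integrableOn_Ioi_deriv_of_nonneg' hd hs hm,
    integral_Ioi_of_hasDerivAt_of_tendsto' hd (integrableOn_Ioi_deriv_of_nonneg' hd hs hm) hm⟩

lemma ftc_nonpos {G q : ℝ → ℝ} {m : ℝ}
    (hd : ∀ x ∈ Set.Ici (0:ℝ), HasDerivAt G (q x) x)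
    (hs : ∀ x ∈ Set.Ioi (0:ℝ), q x ≤ 0)
    (hm : Tendsto G atTop (nhds m)) :
    IntegrableOn q (Set.Ioi 0) ∧ (∫ x in Set.Ioi (0:ℝ), q x) = m - G 0 := by
  have hd' : ∀ x ∈ Set.Ici (0:ℝ), HasDerivAt (fun y => -G y) ((fun y => -q y) x) x :=
    fun x hx => (hd x hx).neg
  have hs' : ∀ x ∈ Set.Ioi (0:ℝ), 0 ≤ (fun y => -q y) x := fun x hx => neg_nonneg.2 (hs x hx)
  obtain ⟨hint, hval⟩ := ftc_nonneg hd' hs' hm.neg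
  have hint' : IntegrableOn q (Set.Ioi 0) := by
    have he : q = fun y => -((fun y => -q y) y) := by funext y; simp
    rw [he]; exact hint.neg
  refine ⟨hint', ?_⟩
  have : (∫ x in Set.Ioi (0:ℝ), -q x) = -∫ x in Set.Ioi (0:ℝ), q x := integral_neg q
  simp only [this] at hval
  linarith [hval]

lemma tendsto_ratio {a : ℝ} (ha : 0 < a) :
    Tendsto (fun s : ℝ => Real.log (1 + a*s) - Real.log (1 + s)) atTop (nhds (Real.log a)) := by
  have hinv : Tendsto (fun s : ℝ => s⁻¹) atTop (nhds (0:ℝ)) := tendsto_inv_atTop_zero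
  have hnum : Tendsto (fun s : ℝ => s⁻¹ + a) atTop (nhds a) := by
    simpa using hinv.add_const a
  have hden : Tendsto (fun s : ℝ => s⁻¹ + 1) atTop (nhds (1:ℝ)) := by
    simpa using hinv.add_const 1
  have h1 : Tendsto (fun s : ℝ => (1 + a*s)/(1+s)) atTop (nhds a) := by
    have h := hnum.div hden one_ne_zero
    rw [div_one] at h
    apply h.congr'
    filter_upwards [eventually_gt_atTop 0] with s hs
    have hs0 : s ≠ 0 := ne_of_gt hs
    have : (1:ℝ) + s ≠ 0 := by positivity
    simp only [Pi.div_apply]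
    field_simp
  have h2 := (Real.continuousAt_log (ne_of_gt ha)).tendsto.comp h1
  apply h2.congr'
  filter_upwards [eventually_gt_atTop 0] with s hs
  rw [Function.comp_apply, Real.log_div (by positivity) (by positivity)]

lemma d_log1 (x : ℝ) (hx : (0:ℝ) ≤ x) :
    HasDerivAt (fun s : ℝ => Real.log (1 + s)) (1/(1+x)) x := by
  have h : (0:ℝ) < 1 + x := by linarith
  simpa using ((hasDerivAt_id x).const_add 1).log (ne_of_gt h)

lemma d_loga {a : ℝ} (ha : 0 < a) (x : ℝ) (hx : (0:ℝ) ≤ x) :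
    HasDerivAt (fun s : ℝ => Real.log (1 + a*s)) (a/(1+a*x)) x := by
  have h : (0:ℝ) < 1 + a*x := by positivity
  simpa using (((hasDerivAt_id x).const_mul a).const_add 1).log (ne_of_gt h)

lemma d_inv1 (x : ℝ) (hx : (0:ℝ) ≤ x) :
    HasDerivAt (fun s : ℝ => 1/(1+s)) (-(1/(1+x)^2)) x := by
  have h : (0:ℝ) < 1 + x := by linarith
  have := (hasDerivAt_const x (1:ℝ)).div ((hasDerivAt_id x).const_add 1) (ne_of_gt h)
  refine this.congr_deriv ?_
  simp only [id, Pi.add_apply, Pi.sub_apply, Pi.mul_apply, Pi.pow_apply]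
  field_simp
  ring

lemma d_inva {a : ℝ} (ha : 0 < a) (x : ℝ) (hx : (0:ℝ) ≤ x) :
    HasDerivAt (fun s : ℝ => 1/(1+a*s)) (-(a/(1+a*x)^2)) x := by
  have h : (0:ℝ) < 1 + a*x := by positivity
  have := (hasDerivAt_const x (1:ℝ)).div (((hasDerivAt_id x).const_mul a).const_add 1) (ne_of_gt h)
  refine this.congr_deriv ?_
  simp only [id, Pi.add_apply, Pi.sub_apply, Pi.mul_apply, Pi.pow_apply]
  field_simp
  ring

lemma tendsto_inv1 : Tendsto (fun s : ℝ => 1/(1+s)) atTop (nhds (0:ℝ)) := by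
  have h : Tendsto (fun s : ℝ => 1+s) atTop atTop := tendsto_atTop_add_const_left _ 1 tendsto_id
  simpa [one_div, Pi.inv_def] using h.inv_tendsto_atTop

lemma tendsto_inva {a : ℝ} (ha : 0 < a) :
    Tendsto (fun s : ℝ => 1/(1+a*s)) atTop (nhds (0:ℝ)) := by
  have h : Tendsto (fun s : ℝ => 1+a*s) atTop atTop :=
    tendsto_atTop_add_const_left _ 1 (tendsto_id.const_mul_atTop ha)
  simpa [one_div, Pi.inv_def] using h.inv_tendsto_atTop

lemma u_lower {a : ℝ} (ha : 0 < a) (hle : a < 1) (x : ℝ) (hx : (0:ℝ) ≤ x) :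
    Real.log a ≤ Real.log (1+a*x) - Real.log (1+x) := by
  have h1 : (0:ℝ) < 1 + x := by linarith
  have h2 : (0:ℝ) < a * (1+x) := by positivity
  have key : Real.log (a * (1+x)) ≤ Real.log (1+a*x) :=
    Real.log_le_log h2 (by nlinarith)
  rw [Real.log_mul (ne_of_gt ha) (ne_of_gt h1)] at key
  linarith

lemma u_upper {a : ℝ} (ha : 0 < a) (hge : 1 < a) (x : ℝ) (hx : (0:ℝ) ≤ x) :
    Real.log (1+a*x) - Real.log (1+x) ≤ Real.log a := by
  have h1 : (0:ℝ) < 1 + x := by linarith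
  have h2 : (0:ℝ) < 1 + a*x := by positivity
  have key : Real.log (1+a*x) ≤ Real.log (a * (1+x)) :=
    Real.log_le_log h2 (by nlinarith)
  rw [Real.log_mul (ne_of_gt ha) (ne_of_gt h1)] at key
  linarith

lemma intq1 {a : ℝ} (ha : 0 < a) (hane : a ≠ 1) :
    IntegrableOn
      (fun s => (Real.log (1+a*s) - Real.log (1+s) - Real.log a) * (1/(1+s)^2)) (Set.Ioi 0) ∧
    (∫ s in Set.Ioi (0:ℝ), (Real.log (1+a*s) - Real.log (1+s) - Real.log a) * (1/(1+s)^2))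
      = a * Real.log a/(a-1) - Real.log a - 1 := by
  have ha1 : a - 1 ≠ 0 := sub_ne_zero.2 hane
  set L := Real.log a with hL
  set G : ℝ → ℝ := fun s =>
    (Real.log (1+s) + L - Real.log (1+a*s)) * (1/(1+s))
      + (a/(a-1)) * (Real.log (1+a*s) - Real.log (1+s)) + 1/(1+s) with hG
  have hd : ∀ x ∈ Set.Ici (0:ℝ), HasDerivAt G
      ((fun s => (Real.log (1+a*s) - Real.log (1+s) - L) * (1/(1+s)^2)) x) x := by
    intro x hx
    have hx0 : (0:ℝ) ≤ x := hx
    have h1 : (0:ℝ) < 1 + x := by linarith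
    have h2 : (0:ℝ) < 1 + a*x := by positivity
    have d1 := d_loga ha x hx0
    have d2 := d_log1 x hx0
    have d3 := d_inv1 x hx0
    have total := (((d2.add_const L).sub d1).mul d3).add
      ((d1.sub d2).const_mul (a/(a-1))) |>.add d3
    refine total.congr_deriv ?_
    simp only [id, Pi.add_apply, Pi.sub_apply, Pi.mul_apply, Pi.pow_apply]
    field_simp
    ring
  have hm : Tendsto G atTop (nhds (a*L/(a-1))) := by
    have t0 := tendsto_ratio ha
    have t1 : Tendsto (fun s : ℝ => Real.log (1+s) + L - Real.log (1+a*s)) atTop (nhds 0) := by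
      have h := t0.neg.add_const L
      rw [neg_add_cancel] at h
      exact h.congr (fun s => by ring)
    have hm' := ((t1.mul tendsto_inv1).add (t0.const_mul (a/(a-1)))).add tendsto_inv1
    have hv : ((0:ℝ) * 0 + (a/(a-1) * L)) + 0 = a*L/(a-1) := by ring
    rwa [hv] at hm'
  have hG0 : G 0 = L + 1 := by simp [hG]
  rcases lt_or_gt_of_ne hane with hlt | hgt
  · have hs : ∀ x ∈ Set.Ioi (0:ℝ), 0 ≤ (Real.log (1+a*x) - Real.log (1+x) - L) * (1/(1+x)^2) := by
      intro x hx
      have hx0 : (0:ℝ) < x := hx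
      have := u_lower ha hlt x hx0.le
      have h1 : (0:ℝ) < 1 + x := by linarith
      have : (0:ℝ) ≤ Real.log (1+a*x) - Real.log (1+x) - L := by linarith
      positivity
    obtain ⟨hi, hv⟩ := ftc_nonneg hd hs hm
    exact ⟨hi, by rw [hv, hG0]; ring⟩
  · have hs : ∀ x ∈ Set.Ioi (0:ℝ), (Real.log (1+a*x) - Real.log (1+x) - L) * (1/(1+x)^2) ≤ 0 := by
      intro x hx
      have hx0 : (0:ℝ) < x := hx
      have hu := u_upper ha hgt x hx0.le
      have h1 : (0:ℝ) < 1 + x := by linarith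
      apply mul_nonpos_of_nonpos_of_nonneg
      · linarith
      · positivity
    obtain ⟨hi, hv⟩ := ftc_nonpos hd hs hm
    exact ⟨hi, by rw [hv, hG0]; ring⟩

lemma intq2 {a : ℝ} (ha : 0 < a) (hane : a ≠ 1) :
    IntegrableOn
      (fun s => (Real.log (1+a*s) - Real.log (1+s) - Real.log a) * (a/(1+a*s)^2)) (Set.Ioi 0) ∧
    (∫ s in Set.Ioi (0:ℝ), (Real.log (1+a*s) - Real.log (1+s) - Real.log a) * (a/(1+a*s)^2))
      = Real.log a/(1-a) - Real.log a + 1 := by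
  have ha1 : a - 1 ≠ 0 := sub_ne_zero.2 hane
  have ha1' : (1:ℝ) - a ≠ 0 := fun h => hane (by linarith [sub_eq_zero.1 h])
  set L := Real.log a with hL
  set G : ℝ → ℝ := fun s =>
    (Real.log (1+s) + L - Real.log (1+a*s)) * (1/(1+a*s))
      + (1/(1-a)) * (Real.log (1+a*s) - Real.log (1+s)) - 1/(1+a*s) with hG
  have hd : ∀ x ∈ Set.Ici (0:ℝ), HasDerivAt G
      ((fun s => (Real.log (1+a*s) - Real.log (1+s) - L) * (a/(1+a*s)^2)) x) x := by
    intro x hx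
    have hx0 : (0:ℝ) ≤ x := hx
    have h1 : (0:ℝ) < 1 + x := by linarith
    have h2 : (0:ℝ) < 1 + a*x := by positivity
    have d1 := d_loga ha x hx0
    have d2 := d_log1 x hx0
    have d4 := d_inva ha x hx0
    have total := (((d2.add_const L).sub d1).mul d4).add
      ((d1.sub d2).const_mul (1/(1-a))) |>.sub d4
    refine total.congr_deriv ?_
    simp only [id, Pi.add_apply, Pi.sub_apply, Pi.mul_apply, Pi.pow_apply]
    field_simp
    ring
  have hm : Tendsto G atTop (nhds (L/(1-a))) := by
    have t0 := tendsto_ratio ha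
    have t1 : Tendsto (fun s : ℝ => Real.log (1+s) + L - Real.log (1+a*s)) atTop (nhds 0) := by
      have h := t0.neg.add_const L
      rw [neg_add_cancel] at h
      exact h.congr (fun s => by ring)
    have hm' := ((t1.mul (tendsto_inva ha)).add (t0.const_mul (1/(1-a)))).sub (tendsto_inva ha)
    have hv : ((0:ℝ) * 0 + (1/(1-a) * L)) - 0 = L/(1-a) := by ring
    rwa [hv] at hm'
  have hG0 : G 0 = L - 1 := by simp [hG]
  rcases lt_or_gt_of_ne hane with hlt | hgt
  · have hs : ∀ x ∈ Set.Ioi (0:ℝ), 0 ≤ (Real.log (1+a*x) - Real.log (1+x) - L) * (a/(1+a*x)^2) := by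
      intro x hx
      have hx0 : (0:ℝ) < x := hx
      have := u_lower ha hlt x hx0.le
      have h2 : (0:ℝ) < 1 + a*x := by positivity
      have h3 : (0:ℝ) ≤ Real.log (1+a*x) - Real.log (1+x) - L := by linarith
      positivity
    obtain ⟨hi, hv⟩ := ftc_nonneg hd hs hm
    exact ⟨hi, by rw [hv, hG0]; ring⟩
  · have hs : ∀ x ∈ Set.Ioi (0:ℝ), (Real.log (1+a*x) - Real.log (1+x) - L) * (a/(1+a*x)^2) ≤ 0 := by
      intro x hx
      have hx0 : (0:ℝ) < x := hx
      have hu := u_upper ha hgt x hx0.le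
      have h2 : (0:ℝ) < 1 + a*x := by positivity
      apply mul_nonpos_of_nonpos_of_nonneg
      · linarith
      · positivity
    obtain ⟨hi, hv⟩ := ftc_nonpos hd hs hm
    exact ⟨hi, by rw [hv, hG0]; ring⟩

lemma intC {a : ℝ} (ha : 0 < a) (hane : a ≠ 1) :
    (∫ s in Set.Ioi (0:ℝ), (8*a*s/(1+a*s)^2) * (2/(1+s)^2))
      = 16*a*((a+1)*Real.log a - 2*(a-1))/(a-1)^3 := by
  have ha1 : a - 1 ≠ 0 := sub_ne_zero.2 hane
  set L := Real.log a with hL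
  set G : ℝ → ℝ := fun s =>
    (16*a*(a+1)/(a-1)^3) * (Real.log (1+a*s) - Real.log (1+s))
      + (16*a/(a-1)^2) * (1/(1+s) + 1/(1+a*s)) with hG
  have hd : ∀ x ∈ Set.Ici (0:ℝ), HasDerivAt G
      ((fun s => (8*a*s/(1+a*s)^2) * (2/(1+s)^2)) x) x := by
    intro x hx
    have hx0 : (0:ℝ) ≤ x := hx
    have h1 : (0:ℝ) < 1 + x := by linarith
    have h2 : (0:ℝ) < 1 + a*x := by positivity
    have d1 := d_loga ha x hx0
    have d2 := d_log1 x hx0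
    have d3 := d_inv1 x hx0
    have d4 := d_inva ha x hx0
    have total := ((d1.sub d2).const_mul (16*a*(a+1)/(a-1)^3)).add
      ((d3.add d4).const_mul (16*a/(a-1)^2))
    refine total.congr_deriv ?_
    simp only [id, Pi.add_apply, Pi.sub_apply, Pi.mul_apply, Pi.pow_apply]
    field_simp
    ring
  have hm : Tendsto G atTop (nhds (16*a*(a+1)/(a-1)^3 * L)) := by
    have t0 := tendsto_ratio ha
    have hm' := (t0.const_mul (16*a*(a+1)/(a-1)^3)).add
      ((tendsto_inv1.add (tendsto_inva ha)).const_mul (16*a/(a-1)^2))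
    have hv : (16*a*(a+1)/(a-1)^3 * L) + (16*a/(a-1)^2 * (0 + 0))
        = 16*a*(a+1)/(a-1)^3 * L := by ring
    rwa [hv] at hm'
  have hG0 : G 0 = 32*a/(a-1)^2 := by
    simp [hG]
    ring
  have hs : ∀ x ∈ Set.Ioi (0:ℝ), 0 ≤ (8*a*x/(1+a*x)^2) * (2/(1+x)^2) := by
    intro x hx
    have hx0 : (0:ℝ) < x := hx
    have h1 : (0:ℝ) < 1 + x := by linarith
    have h2 : (0:ℝ) < 1 + a*x := by positivity
    positivity
  obtain ⟨hi, hv⟩ := ftc_nonneg hd hs hm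
  rw [hv, hG0]
  field_simp
  ring

lemma intC1 :
    (∫ s in Set.Ioi (0:ℝ), (8*(1:ℝ)*s/(1+1*s)^2) * (2/(1+s)^2)) = 8/3 := by
  set G : ℝ → ℝ := fun s => -(8) * (1/(1+s)^2) + (16/3) * (1/(1+s)^3) with hG
  have hd : ∀ x ∈ Set.Ici (0:ℝ), HasDerivAt G
      ((fun s => (8*(1:ℝ)*s/(1+1*s)^2) * (2/(1+s)^2)) x) x := by
    intro x hx
    have hx0 : (0:ℝ) ≤ x := hx
    have h1 : (0:ℝ) < 1 + x := by linarith
    have d5 : HasDerivAt (fun s : ℝ => 1/(1+s)^2) (-(2/(1+x)^3)) x := by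
      have := (hasDerivAt_const x (1:ℝ)).div (((hasDerivAt_id x).const_add 1).pow 2)
        (pow_ne_zero _ (ne_of_gt h1))
      refine this.congr_deriv ?_
      simp only [id, Pi.add_apply, Pi.sub_apply, Pi.mul_apply, Pi.pow_apply]
      field_simp
      ring
    have d6 : HasDerivAt (fun s : ℝ => 1/(1+s)^3) (-(3/(1+x)^4)) x := by
      have := (hasDerivAt_const x (1:ℝ)).div (((hasDerivAt_id x).const_add 1).pow 3)
        (pow_ne_zero _ (ne_of_gt h1))
      refine this.congr_deriv ?_
      simp only [id, Pi.add_apply, Pi.sub_apply, Pi.mul_apply, Pi.pow_apply]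
      field_simp
      ring
    have total := (d5.const_mul (-(8:ℝ))).add (d6.const_mul (16/3))
    refine total.congr_deriv ?_
    simp only [id, Pi.add_apply, Pi.sub_apply, Pi.mul_apply, Pi.pow_apply]
    field_simp
    ring
  have hm : Tendsto G atTop (nhds 0) := by
    have t2 : Tendsto (fun s : ℝ => 1/(1+s)^2) atTop (nhds 0) := by
      have h := tendsto_inv1.mul tendsto_inv1
      rw [mul_zero] at h
      exact h.congr (fun s => by rw [div_mul_div_comm, one_mul, ← pow_two])
    have t3 : Tendsto (fun s : ℝ => 1/(1+s)^3) atTop (nhds 0) := by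
      have h := t2.mul tendsto_inv1
      rw [mul_zero] at h
      exact h.congr (fun s => by rw [div_mul_div_comm, mul_one, ← pow_succ])
    have hm' := (t2.const_mul (-(8:ℝ))).add (t3.const_mul (16/3))
    have hv : (-(8:ℝ)) * 0 + (16/3) * 0 = 0 := by ring
    rwa [hv] at hm'
  have hG0 : G 0 = -8/3 := by
    simp [hG]
    norm_num
  have hs : ∀ x ∈ Set.Ioi (0:ℝ), 0 ≤ (8*(1:ℝ)*x/(1+1*x)^2) * (2/(1+x)^2) := by
    intro x hx
    have hx0 : (0:ℝ) < x := hx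
    have h1 : (0:ℝ) < 1 + x := by linarith
    positivity
  obtain ⟨hi, hv⟩ := ftc_nonneg hd hs hm
  rw [hv, hG0]
  norm_num

section kcalc
open Real

noncomputable def kfun (x : ℝ) : ℝ := (x * Real.cosh x - Real.sinh x) / Real.sinh x
noncomputable def k1fun (x : ℝ) : ℝ := (Real.sinh x * Real.cosh x - x) / Real.sinh x ^ 2

lemma nonneg_of_deriv {f f' : ℝ → ℝ} (hd : ∀ x, HasDerivAt f (f' x) x) (h0 : f 0 = 0)
    (hp : ∀ x, 0 ≤ x → 0 ≤ f' x) : ∀ x, 0 ≤ x → 0 ≤ f x := by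
  have hm : MonotoneOn f (Set.Ici 0) := by
    refine monotoneOn_of_deriv_nonneg (convex_Ici 0)
      ((continuous_iff_continuousAt.2 fun x => (hd x).continuousAt).continuousOn)
      (fun x _ => (hd x).differentiableAt.differentiableWithinAt) (fun x hx => ?_)
    rw [interior_Ici, Set.mem_Ioi] at hx
    rw [(hd x).deriv]
    exact hp x hx.le
  intro x hx
  have := hm Set.self_mem_Ici hx hx
  rw [h0] at this
  exact this

lemma pos_of_deriv {f f' : ℝ → ℝ} (hd : ∀ x, HasDerivAt f (f' x) x) (h0 : f 0 = 0)
    (hp : ∀ x, 0 < x → 0 < f' x) : ∀ x, 0 < x → 0 < f x := by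
  have hm : StrictMonoOn f (Set.Ici 0) := by
    refine strictMonoOn_of_deriv_pos (convex_Ici 0)
      ((continuous_iff_continuousAt.2 fun x => (hd x).continuousAt).continuousOn)
      (fun x hx => ?_)
    rw [interior_Ici, Set.mem_Ioi] at hx
    rw [(hd x).deriv]
    exact hp x hx
  intro x hx
  have := hm Set.self_mem_Ici hx.le hx
  rw [h0] at this
  exact this

lemma L2 : ∀ x : ℝ, 0 ≤ x → Real.sinh x ≤ x * Real.cosh x := by
  intro x hx
  have h : (0:ℝ) ≤ x * Real.cosh x - Real.sinh x := nonneg_of_deriv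
    (f' := fun y => (1 * Real.cosh y + y * Real.sinh y) - Real.cosh y)
    (fun y => ((hasDerivAt_id y).mul (Real.hasDerivAt_cosh y)).sub (Real.hasDerivAt_sinh y))
    (by simp)
    (fun y hy => by
      show (0:ℝ) ≤ (1 * Real.cosh y + y * Real.sinh y) - Real.cosh y
      have := Real.sinh_nonneg_iff.2 hy
      nlinarith) x hx
  linarith

lemma L2strict : ∀ x : ℝ, 0 < x → Real.sinh x < x * Real.cosh x := by
  intro x hx
  have h : (0:ℝ) < x * Real.cosh x - Real.sinh x := pos_of_deriv
    (f' := fun y => (1 * Real.cosh y + y * Real.sinh y) - Real.cosh y)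
    (fun y => ((hasDerivAt_id y).mul (Real.hasDerivAt_cosh y)).sub (Real.hasDerivAt_sinh y))
    (by simp)
    (fun y hy => by
      show (0:ℝ) < (1 * Real.cosh y + y * Real.sinh y) - Real.cosh y
      have := Real.sinh_pos_iff.2 hy
      nlinarith) x hx
  linarith

lemma L4 : ∀ x : ℝ, 0 ≤ x → 1 + x*x/2 ≤ Real.cosh x := by
  intro x hx
  have h : (0:ℝ) ≤ (Real.cosh x - 1) - x*x/2 := nonneg_of_deriv
    (f' := fun y => Real.sinh y - (1*y + y*1)/2)
    (fun y => ((Real.hasDerivAt_cosh y).sub_const 1).sub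
      (((hasDerivAt_id y).mul (hasDerivAt_id y)).div_const 2))
    (by simp)
    (fun y hy => by
      show (0:ℝ) ≤ Real.sinh y - (1*y + y*1)/2
      have := Real.self_le_sinh_iff.2 hy
      linarith) x hx
  linarith

lemma L5 : ∀ x : ℝ, 0 ≤ x → x + x*x*x/6 ≤ Real.sinh x := by
  intro x hx
  have h : (0:ℝ) ≤ Real.sinh x - x - x*x*x/6 := nonneg_of_deriv
    (f' := fun y => (Real.cosh y - 1) - ((1*y + y*1)*y + y*y*1)/6)
    (fun y => (((Real.hasDerivAt_sinh y).sub (hasDerivAt_id y)).sub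
      ((((hasDerivAt_id y).mul (hasDerivAt_id y)).mul (hasDerivAt_id y)).div_const 6)))
    (by simp)
    (fun y hy => by
      show (0:ℝ) ≤ (Real.cosh y - 1) - ((1*y + y*1)*y + y*y*1)/6
      have := L4 y hy
      nlinarith) x hx
  linarith

lemma L7 : ∀ x : ℝ, 0 ≤ x → Real.cosh x - 1 ≤ x*x/2 * Real.cosh x := by
  intro x hx
  have h : (0:ℝ) ≤ x*x/2 * Real.cosh x - (Real.cosh x - 1) := nonneg_of_deriv
    (f' := fun y => ((1*y + y*1)/2 * Real.cosh y + y*y/2 * Real.sinh y) - Real.sinh y)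
    (fun y => ((((hasDerivAt_id y).mul (hasDerivAt_id y)).div_const 2).mul
      (Real.hasDerivAt_cosh y)).sub ((Real.hasDerivAt_cosh y).sub_const 1))
    (by simp)
    (fun y hy => by
      show (0:ℝ) ≤ ((1*y + y*1)/2 * Real.cosh y + y*y/2 * Real.sinh y) - Real.sinh y
      have h2 := L2 y hy
      have h3 := Real.sinh_nonneg_iff.2 hy
      nlinarith) x hx
  linarith

lemma L6 : ∀ x : ℝ, 0 ≤ x → Real.sinh x - x ≤ x*x*x/6 * Real.cosh x := by
  intro x hx
  have h : (0:ℝ) ≤ x*x*x/6 * Real.cosh x - Real.sinh x + x := nonneg_of_deriv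
    (f := fun y => y*y*y/6 * Real.cosh y - Real.sinh y + y)
    (f' := fun y => (((1*y + y*1)*y + y*y*1)/6 * Real.cosh y + y*y*y/6 * Real.sinh y
        - Real.cosh y) + 1)
    (fun y => (((((((hasDerivAt_id y).mul (hasDerivAt_id y)).mul (hasDerivAt_id y)).div_const 6).mul
      (Real.hasDerivAt_cosh y)).sub (Real.hasDerivAt_sinh y)).add (hasDerivAt_id y)))
    (by simp)
    (fun y hy => by
      show (0:ℝ) ≤ (((1*y + y*1)*y + y*y*1)/6 * Real.cosh y + y*y*y/6 * Real.sinh y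
        - Real.cosh y) + 1
      have h7 := L7 y hy
      have h3 := Real.sinh_nonneg_iff.2 hy
      nlinarith [mul_nonneg (mul_nonneg (mul_nonneg hy hy) hy) h3]) x hx
  linarith

lemma L3 : ∀ x : ℝ, 0 ≤ x → x * Real.cosh x - Real.sinh x ≤ x*x*x/3 * Real.cosh x := by
  intro x hx
  have h : (0:ℝ) ≤ x*x*x/3 * Real.cosh x - x * Real.cosh x + Real.sinh x := nonneg_of_deriv
    (f := fun y => y*y*y/3 * Real.cosh y - y * Real.cosh y + Real.sinh y)
    (f' := fun y => ((((1*y + y*1)*y + y*y*1)/3) * Real.cosh y + y*y*y/3 * Real.sinh y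
        - (1 * Real.cosh y + y * Real.sinh y)) + Real.cosh y)
    (fun y => ((((((hasDerivAt_id y).mul (hasDerivAt_id y)).mul (hasDerivAt_id y)).div_const 3).mul
      (Real.hasDerivAt_cosh y)).sub ((hasDerivAt_id y).mul (Real.hasDerivAt_cosh y))).add
      (Real.hasDerivAt_sinh y))
    (by simp)
    (fun y hy => by
      show (0:ℝ) ≤ ((((1*y + y*1)*y + y*y*1)/3) * Real.cosh y + y*y*y/3 * Real.sinh y
        - (1 * Real.cosh y + y * Real.sinh y)) + Real.cosh y
      have h2 := L2 y hy
      have h3 := Real.sinh_nonneg_iff.2 hy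
      have hc := Real.cosh_pos (x := y)
      nlinarith [mul_nonneg hy (sub_nonneg.2 h2),
        mul_nonneg (mul_nonneg (mul_nonneg hy hy) hy) h3]) x hx
  linarith

end kcalc

lemma kfun_zero : kfun 0 = 0 := by simp [kfun]

lemma k1fun_zero : k1fun 0 = 0 := by simp [k1fun]

lemma kfun_even (x : ℝ) : kfun (-x) = kfun x := by
  simp only [kfun, Real.sinh_neg, Real.cosh_neg]
  rw [show -x * Real.cosh x - -Real.sinh x = -(x * Real.cosh x - Real.sinh x) by ring, neg_div_neg_eq]

lemma k1fun_odd (x : ℝ) : k1fun (-x) = -k1fun x := by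
  simp only [k1fun, Real.sinh_neg, Real.cosh_neg, neg_sq]
  rw [show -Real.sinh x * Real.cosh x - -x = -(Real.sinh x * Real.cosh x - x) by ring, neg_div]

lemma k_hasDeriv_ne (x : ℝ) (hx : x ≠ 0) : HasDerivAt kfun (k1fun x) x := by
  have hs : Real.sinh x ≠ 0 := Real.sinh_ne_zero.2 hx
  have h := (((hasDerivAt_id x).mul (Real.hasDerivAt_cosh x)).sub
    (Real.hasDerivAt_sinh x)).div (Real.hasDerivAt_sinh x) hs
  have he : kfun = fun y => (y * Real.cosh y - Real.sinh y) / Real.sinh y := rfl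
  rw [he]
  refine h.congr_deriv ?_
  simp only [id, Pi.add_apply, Pi.sub_apply, Pi.mul_apply, Pi.pow_apply]
  unfold k1fun
  have hc := Real.cosh_sq_sub_sinh_sq x
  field_simp
  linear_combination (-x) * hc

lemma k1_hasDeriv_ne (x : ℝ) (hx : x ≠ 0) :
    HasDerivAt k1fun (2*(x*Real.cosh x - Real.sinh x)/Real.sinh x^3) x := by
  have hs : Real.sinh x ≠ 0 := Real.sinh_ne_zero.2 hx
  have h := (((Real.hasDerivAt_sinh x).mul (Real.hasDerivAt_cosh x)).sub
    (hasDerivAt_id x)).div ((Real.hasDerivAt_sinh x).pow 2) (pow_ne_zero 2 hs)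
  have he : k1fun = fun y => (Real.sinh y * Real.cosh y - y) / Real.sinh y ^ 2 := rfl
  rw [he]
  refine h.congr_deriv ?_
  simp only [id, Pi.add_apply, Pi.sub_apply, Pi.mul_apply, Pi.pow_apply]
  have hc := Real.cosh_sq_sub_sinh_sq x
  field_simp
  linear_combination (-(Real.sinh x^2)) * hc

lemma slope_kfun (x : ℝ) : slope kfun 0 x = kfun x / x := by
  rw [slope_def_field, kfun_zero, sub_zero, sub_zero]

lemma slope_k1fun (x : ℝ) : slope k1fun 0 x = k1fun x / x := by
  rw [slope_def_field, k1fun_zero, sub_zero, sub_zero]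

lemma k_hasDeriv_zero : HasDerivAt kfun (0:ℝ) 0 := by
  rw [hasDerivAt_iff_tendsto_slope]
  have key : ∀ y : ℝ, 0 < y → |kfun y / y| ≤ |y| * Real.cosh y / 3 := by
    intro y hy
    have hsy : 0 < Real.sinh y := Real.sinh_pos_iff.2 hy
    have h2 := L2 y hy.le
    have h3 := L3 y hy.le
    have hyle : y ≤ Real.sinh y := Real.self_le_sinh_iff.2 hy.le
    have hcy : 0 < Real.cosh y := Real.cosh_pos y
    have hkf : kfun y / y = (y * Real.cosh y - Real.sinh y) / (y * Real.sinh y) := by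
      unfold kfun
      rw [div_div]
      ring_nf
    have hnum : 0 ≤ y * Real.cosh y - Real.sinh y := by linarith
    have hden : 0 < y * Real.sinh y := mul_pos hy hsy
    rw [hkf, abs_of_nonneg (div_nonneg hnum hden.le), abs_of_pos hy, div_le_div_iff₀ hden (by norm_num : (0:ℝ) < 3)]
    nlinarith [mul_nonneg (mul_nonneg (mul_pos hy hy).le hcy.le) (sub_nonneg.2 hyle)]
  have hb : ∀ x : ℝ, x ≠ 0 → |slope kfun 0 x| ≤ |x| * Real.cosh x / 3 := by
    intro x hx
    rw [slope_kfun]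
    rcases hx.lt_or_gt with hneg | hpos
    · have h := key (-x) (by linarith)
      rw [kfun_even, abs_neg, abs_div, Real.cosh_neg, abs_neg] at h
      rwa [abs_div]
    · exact key x hpos
  have hgb : Tendsto (fun x : ℝ => |x| * Real.cosh x / 3) (nhdsWithin 0 {(0:ℝ)}ᶜ) (nhds 0) := by
    have hc : Continuous (fun x : ℝ => |x| * Real.cosh x / 3) :=
      (continuous_abs.mul Real.continuous_cosh).div_const 3
    have := hc.tendsto 0
    simp only [abs_zero, zero_mul, zero_div] at this
    exact this.mono_left nhdsWithin_le_nhds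
  apply squeeze_zero_norm' _ hgb
  filter_upwards [self_mem_nhdsWithin] with x hx
  exact hb x hx

lemma k1_hasDeriv_zero : HasDerivAt k1fun (2/3 : ℝ) 0 := by
  rw [hasDerivAt_iff_tendsto_slope]
  have key : ∀ y : ℝ, y ≠ 0 →
      (2/3) / Real.cosh y ^ 2 ≤ k1fun y / y ∧ k1fun y / y ≤ (2/3) * Real.cosh (2*y) := by
    have pos : ∀ y : ℝ, 0 < y →
        (2/3) / Real.cosh y ^ 2 ≤ k1fun y / y ∧ k1fun y / y ≤ (2/3) * Real.cosh (2*y) := by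
      intro y hy
      have hsy : 0 < Real.sinh y := Real.sinh_pos_iff.2 hy
      have hcy : 0 < Real.cosh y := Real.cosh_pos y
      have hc2y : 0 < Real.cosh (2*y) := Real.cosh_pos (2*y)
      have hyle : y ≤ Real.sinh y := Real.self_le_sinh_iff.2 hy.le
      have h2 := L2 y hy.le
      -- numerator bounds via sinh(2y)
      have hs2 : Real.sinh (2*y) = 2 * Real.sinh y * Real.cosh y := Real.sinh_two_mul y
      have hlow : 2*y + (2*y)*(2*y)*(2*y)/6 ≤ Real.sinh (2*y) := L5 (2*y) (by linarith)
      have hhigh : Real.sinh (2*y) - 2*y ≤ (2*y)*(2*y)*(2*y)/6 * Real.cosh (2*y) :=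
        L6 (2*y) (by linarith)
      have hk1 : k1fun y / y = (Real.sinh y * Real.cosh y - y) / (y * Real.sinh y ^ 2) := by
        unfold k1fun
        rw [div_div]
        ring_nf
      have hden : 0 < y * Real.sinh y ^ 2 := by positivity
      constructor
      · rw [hk1, div_le_div_iff₀ (by positivity) hden]
        -- (2/3) * (y sinh²) ≤ (sinh cosh − y) cosh²
        -- use sinh ≤ y cosh : sinh² ≤ y² cosh², and sinh cosh − y ≥ 2y³/3
        have hnum : 2*y*y*y/3 ≤ Real.sinh y * Real.cosh y - y := by nlinarith
        have hsq : Real.sinh y ^ 2 ≤ y^2 * Real.cosh y ^2 := by nlinarith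
        nlinarith [mul_le_mul_of_nonneg_left hsq (by positivity : (0:ℝ) ≤ (2/3) * y / (y^2)), sq_nonneg (Real.cosh y)]
      · rw [hk1, div_le_iff₀ hden]
        have hnum : Real.sinh y * Real.cosh y - y ≤ 2*y*y*y/3 * Real.cosh (2*y) := by nlinarith
        have hsq : y^2 ≤ Real.sinh y ^ 2 := by nlinarith
        nlinarith [mul_le_mul_of_nonneg_left hsq (by positivity : (0:ℝ) ≤ (2/3) * Real.cosh (2*y) * y)]
    intro y hy
    rcases hy.lt_or_gt with hneg | hpos
    · have h := pos (-y) (by linarith)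
      rw [k1fun_odd, Real.cosh_neg, neg_div_neg_eq, show 2*(-y) = -(2*y) by ring, Real.cosh_neg] at h
      exact h
    · exact pos y hpos
  have hlow : Tendsto (fun y : ℝ => (2/3) / Real.cosh y ^ 2) (nhdsWithin 0 {(0:ℝ)}ᶜ) (nhds (2/3)) := by
    have hc : Continuous (fun y : ℝ => (2/3) / Real.cosh y ^ 2) := by
      apply Continuous.div continuous_const (Real.continuous_cosh.pow 2)
      intro y
      exact pow_ne_zero 2 (Real.cosh_pos y).ne'
    have := hc.tendsto 0
    simp only [Real.cosh_zero, one_pow, div_one] at this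
    exact this.mono_left nhdsWithin_le_nhds
  have hhigh : Tendsto (fun y : ℝ => (2/3) * Real.cosh (2*y)) (nhdsWithin 0 {(0:ℝ)}ᶜ) (nhds (2/3)) := by
    have hc : Continuous (fun y : ℝ => (2/3) * Real.cosh (2*y)) :=
      continuous_const.mul (Real.continuous_cosh.comp (continuous_const.mul continuous_id))
    have := hc.tendsto 0
    simp only [mul_zero, Real.cosh_zero, mul_one] at this
    exact this.mono_left nhdsWithin_le_nhds
  apply tendsto_of_tendsto_of_tendsto_of_le_of_le' hlow hhigh
  · filter_upwards [self_mem_nhdsWithin] with y hy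
    rw [slope_k1fun]
    exact (key y hy).1
  · filter_upwards [self_mem_nhdsWithin] with y hy
    rw [slope_k1fun]
    exact (key y hy).2

lemma intBase1 : IntegrableOn (fun s : ℝ => 1/(1+s)^2) (Set.Ioi 0) ∧
    (∫ s in Set.Ioi (0:ℝ), 1/(1+s)^2) = 1 := by
  have hd : ∀ x ∈ Set.Ici (0:ℝ), HasDerivAt (fun s : ℝ => -(1/(1+s)))
      ((fun s : ℝ => 1/(1+s)^2) x) x := by
    intro x hx
    have := (d_inv1 x hx).neg
    simpa [Pi.neg_def] using this
  have hm : Tendsto (fun s : ℝ => -(1/(1+s))) atTop (nhds 0) := by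
    simpa using tendsto_inv1.neg
  have hs : ∀ x ∈ Set.Ioi (0:ℝ), 0 ≤ (fun s : ℝ => 1/(1+s)^2) x := by
    intro x hx
    have hx0 : (0:ℝ) < x := hx
    positivity
  obtain ⟨hi, hv⟩ := ftc_nonneg hd hs hm
  refine ⟨hi, ?_⟩
  rw [hv]
  norm_num

lemma intBasea {a : ℝ} (ha : 0 < a) : IntegrableOn (fun s : ℝ => a/(1+a*s)^2) (Set.Ioi 0) ∧
    (∫ s in Set.Ioi (0:ℝ), a/(1+a*s)^2) = 1 := by
  have hd : ∀ x ∈ Set.Ici (0:ℝ), HasDerivAt (fun s : ℝ => -(1/(1+a*s)))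
      ((fun s : ℝ => a/(1+a*s)^2) x) x := by
    intro x hx
    have := (d_inva ha x hx).neg
    simpa [Pi.neg_def] using this
  have hm : Tendsto (fun s : ℝ => -(1/(1+a*s))) atTop (nhds 0) := by
    simpa using (tendsto_inva ha).neg
  have hs : ∀ x ∈ Set.Ioi (0:ℝ), 0 ≤ (fun s : ℝ => a/(1+a*s)^2) x := by
    intro x hx
    have hx0 : (0:ℝ) < x := hx
    have : (0:ℝ) < 1 + a*x := by positivity
    positivity
  obtain ⟨hi, hv⟩ := ftc_nonneg hd hs hm
  refine ⟨hi, ?_⟩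
  rw [hv]
  norm_num

lemma exp_two_mul_sub_one (x : ℝ) : Real.exp (2*x) - 1 = 2 * Real.sinh x * Real.exp x := by
  rw [Real.sinh_eq, Real.exp_neg, show (2:ℝ)*x = x + x by ring, Real.exp_add]
  have := Real.exp_ne_zero x
  field_simp

lemma exp_two_mul_add_one (x : ℝ) : Real.exp (2*x) + 1 = 2 * Real.cosh x * Real.exp x := by
  rw [Real.cosh_eq, Real.exp_neg, show (2:ℝ)*x = x + x by ring, Real.exp_add]
  have := Real.exp_ne_zero x
  field_simp

lemma idJ (x : ℝ) (hx : x ≠ 0) :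
    (Real.exp (2*x) + 1) * (2*x) / (Real.exp (2*x) - 1) - 2 = 2 * kfun x := by
  have hs : Real.sinh x ≠ 0 := Real.sinh_ne_zero.2 hx
  have he := Real.exp_ne_zero x
  rw [exp_two_mul_sub_one, exp_two_mul_add_one]
  unfold kfun
  field_simp

lemma idC (x : ℝ) (hx : x ≠ 0) :
    16*Real.exp (2*x)*((Real.exp (2*x)+1)*(2*x) - 2*(Real.exp (2*x)-1))/(Real.exp (2*x)-1)^3
      = 8*(x*Real.cosh x - Real.sinh x)/Real.sinh x^3 := by
  have hs : Real.sinh x ≠ 0 := Real.sinh_ne_zero.2 hx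
  have he := Real.exp_ne_zero x
  rw [exp_two_mul_sub_one, exp_two_mul_add_one,
    show (2:ℝ)*x = x + x by ring, Real.exp_add]
  field_simp
  ring

lemma k1fun_tendsto_one : Tendsto k1fun atTop (nhds 1) := by
  have hsinh_top : Tendsto Real.sinh atTop atTop := by
    apply tendsto_atTop_mono' atTop _ tendsto_id
    filter_upwards [eventually_ge_atTop (0:ℝ)] with x hx
    exact Real.self_le_sinh_iff.2 hx
  have T1 : Tendsto (fun x : ℝ => Real.exp (-x) * (Real.sinh x)⁻¹) atTop (nhds 0) := by
    have := Real.tendsto_exp_neg_atTop_nhds_zero.mul hsinh_top.inv_tendsto_atTop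
    simpa using this
  have T2 : Tendsto (fun x : ℝ => x / Real.sinh x ^ 2) atTop (nhds 0) := by
    apply squeeze_zero' (g := fun x : ℝ => 1/x)
    · filter_upwards [eventually_ge_atTop (1:ℝ)] with x hx
      have hs : (0:ℝ) < Real.sinh x := Real.sinh_pos_iff.2 (by linarith)
      positivity
    · filter_upwards [eventually_ge_atTop (1:ℝ)] with x hx
      have hxs : x ≤ Real.sinh x := Real.self_le_sinh_iff.2 (by linarith)
      have hx0 : (0:ℝ) < x := by linarith
      rw [div_le_div_iff₀ (by positivity) hx0]
      nlinarith
    · simpa [one_div] using tendsto_inv_atTop_zero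
  have Tmain : Tendsto (fun x : ℝ => 1 + Real.exp (-x) * (Real.sinh x)⁻¹ - x / Real.sinh x ^ 2)
      atTop (nhds 1) := by
    have := (tendsto_const_nhds (x := (1:ℝ)) (f := atTop)).add T1 |>.sub T2
    simpa using this
  apply Tmain.congr'
  filter_upwards [eventually_gt_atTop (0:ℝ)] with x hx
  have hs : Real.sinh x ≠ 0 := Real.sinh_ne_zero.2 (ne_of_gt hx)
  have hcs := Real.cosh_sub_sinh x
  unfold k1fun
  field_simp
  linear_combination (-(Real.sinh x)) * hcs

lemma Jray_eq (V : ℝ) (t : ℝ) : Jray V t = (V^2/(4*Real.pi)) * kfun (2*t) := by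
  rcases eq_or_ne t 0 with rfl | ht
  · have hphi : ∀ z : ℂ, phiRay V 0 z = 0 := by
      intro z
      unfold phiRay
      have h0 := Complex.normSq_nonneg z
      have h1 : (0:ℝ) < 1 + Complex.normSq z := by linarith
      rw [show (4:ℝ)*0 = 0 by ring, Real.exp_zero, one_mul, div_self (ne_of_gt h1), Real.log_one]
      ring
    unfold Jray
    simp only [hphi, zero_mul, integral_zero]
    norm_num [kfun_zero]
  · set a := Real.exp (4*t) with ha
    have ha0 : 0 < a := Real.exp_pos _
    have hane : a ≠ 1 := by
      rw [ha, Ne, Real.exp_eq_one_iff]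
      intro h
      exact ht (by linarith)
    have ha1 : a - 1 ≠ 0 := sub_ne_zero.2 hane
    have h1a : (1:ℝ) - a ≠ 0 := fun h => hane (by linarith [sub_eq_zero.1 h])
    have hL : Real.log a = 4*t := by rw [ha, Real.log_exp]
    set c : ℝ := V^2/(4*Real.pi^2) with hc
    have hq1 := intq1 ha0 hane
    have hq2 := intq2 ha0 hane
    have hb1 := intBase1
    have hba := intBasea ha0
    have hpi := Real.pi_ne_zero
    have e1 : (∫ z : ℂ, phiRay V t z * omegaZeroDensity V z)
        = Real.pi * ∫ s in Set.Ioi (0:ℝ),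
            (c * ((Real.log (1+a*s) - Real.log (1+s) - Real.log a) * (1/(1+s)^2))
              + (c * (2*t)) * (1/(1+s)^2)) := by
      have hfun : (fun z : ℂ => phiRay V t z * omegaZeroDensity V z)
          = fun z : ℂ => (fun s : ℝ =>
            (c * ((Real.log (1+a*s) - Real.log (1+s) - Real.log a) * (1/(1+s)^2))
              + (c * (2*t)) * (1/(1+s)^2))) (Complex.normSq z) := by
        funext z
        have h0 := Complex.normSq_nonneg z
        have h1 : (0:ℝ) < 1 + Complex.normSq z := by linarith
        have h2 : (0:ℝ) < 1 + a * Complex.normSq z := by nlinarith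
        unfold phiRay omegaZeroDensity
        rw [← ha, Real.log_div (ne_of_gt h2) (ne_of_gt h1), hL, hc]
        field_simp
        ring
      rw [hfun]
      exact integral_complex_radial (fun s : ℝ =>
        c * ((Real.log (1+a*s) - Real.log (1+s) - Real.log a) * (1/(1+s)^2))
          + (c * (2*t)) * (1/(1+s)^2))
    have hsplit1 : (∫ s in Set.Ioi (0:ℝ),
        (c * ((Real.log (1+a*s) - Real.log (1+s) - Real.log a) * (1/(1+s)^2))
          + (c * (2*t)) * (1/(1+s)^2)))
        = c * (a*Real.log a/(a-1) - Real.log a - 1) + (c*(2*t)) * 1 := by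
      rw [integral_add (hq1.1.const_mul c) (hb1.1.const_mul (c*(2*t))),
        MeasureTheory.integral_const_mul, MeasureTheory.integral_const_mul, hq1.2, hb1.2]
    have e2 : (∫ z : ℂ, phiRay V t z * (omegaZeroDensity V z + omegaTDensity V t z))
        = Real.pi * ∫ s in Set.Ioi (0:ℝ),
            ((c * ((Real.log (1+a*s) - Real.log (1+s) - Real.log a) * (1/(1+s)^2))
              + (c * (2*t)) * (1/(1+s)^2))
            + (c * ((Real.log (1+a*s) - Real.log (1+s) - Real.log a) * (a/(1+a*s)^2))
              + (c * (2*t)) * (a/(1+a*s)^2))) := by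
      have hfun : (fun z : ℂ => phiRay V t z * (omegaZeroDensity V z + omegaTDensity V t z))
          = fun z : ℂ => (fun s : ℝ =>
            ((c * ((Real.log (1+a*s) - Real.log (1+s) - Real.log a) * (1/(1+s)^2))
              + (c * (2*t)) * (1/(1+s)^2))
            + (c * ((Real.log (1+a*s) - Real.log (1+s) - Real.log a) * (a/(1+a*s)^2))
              + (c * (2*t)) * (a/(1+a*s)^2)))) (Complex.normSq z) := by
        funext z
        have h0 := Complex.normSq_nonneg z
        have h1 : (0:ℝ) < 1 + Complex.normSq z := by linarith
        have h2 : (0:ℝ) < 1 + a * Complex.normSq z := by nlinarith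
        unfold phiRay omegaZeroDensity omegaTDensity
        rw [← ha, Real.log_div (ne_of_gt h2) (ne_of_gt h1), hL, hc]
        field_simp
        ring
      rw [hfun]
      exact integral_complex_radial (fun s : ℝ =>
        (c * ((Real.log (1+a*s) - Real.log (1+s) - Real.log a) * (1/(1+s)^2))
          + (c * (2*t)) * (1/(1+s)^2))
        + (c * ((Real.log (1+a*s) - Real.log (1+s) - Real.log a) * (a/(1+a*s)^2))
          + (c * (2*t)) * (a/(1+a*s)^2)))
    have hsplit2 : (∫ s in Set.Ioi (0:ℝ),
        ((c * ((Real.log (1+a*s) - Real.log (1+s) - Real.log a) * (1/(1+s)^2))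
          + (c * (2*t)) * (1/(1+s)^2))
        + (c * ((Real.log (1+a*s) - Real.log (1+s) - Real.log a) * (a/(1+a*s)^2))
          + (c * (2*t)) * (a/(1+a*s)^2))))
        = (c * (a*Real.log a/(a-1) - Real.log a - 1) + (c*(2*t)) * 1)
          + (c * (Real.log a/(1-a) - Real.log a + 1) + (c*(2*t)) * 1) := by
      have hI1 : IntegrableOn (fun s : ℝ =>
          c * ((Real.log (1+a*s) - Real.log (1+s) - Real.log a) * (1/(1+s)^2))
            + (c * (2*t)) * (1/(1+s)^2)) (Set.Ioi 0) :=
        (hq1.1.const_mul c).add (hb1.1.const_mul (c*(2*t)))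
      have hI2 : IntegrableOn (fun s : ℝ =>
          c * ((Real.log (1+a*s) - Real.log (1+s) - Real.log a) * (a/(1+a*s)^2))
            + (c * (2*t)) * (a/(1+a*s)^2)) (Set.Ioi 0) :=
        (hq2.1.const_mul c).add (hba.1.const_mul (c*(2*t)))
      rw [integral_add hI1 hI2,
        integral_add (hq1.1.const_mul c) (hb1.1.const_mul (c*(2*t))),
        integral_add (hq2.1.const_mul c) (hba.1.const_mul (c*(2*t))),
        MeasureTheory.integral_const_mul, MeasureTheory.integral_const_mul,
        MeasureTheory.integral_const_mul, MeasureTheory.integral_const_mul,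
        hq1.2, hq2.2, hb1.2, hba.2]
    have hid := idJ (2*t) (mul_ne_zero two_ne_zero ht)
    rw [show (2:ℝ)*(2*t) = 4*t by ring, ← ha] at hid
    have hAB : (a*Real.log a/(a-1) - Real.log a - 1) - (Real.log a/(1-a) - Real.log a + 1)
        = 2 * kfun (2*t) := by
      rw [← hid, hL]
      field_simp
      ring
    unfold Jray
    rw [e1, hsplit1, e2, hsplit2]
    have hpc : Real.pi * c = V^2/(4*Real.pi) := by
      rw [hc]
      field_simp
    calc Real.pi * (c * (a*Real.log a/(a-1) - Real.log a - 1) + (c*(2*t)) * 1)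
        - 1/2 * (Real.pi * ((c * (a*Real.log a/(a-1) - Real.log a - 1) + (c*(2*t)) * 1)
          + (c * (Real.log a/(1-a) - Real.log a + 1) + (c*(2*t)) * 1)))
        = (Real.pi * c / 2) * ((a*Real.log a/(a-1) - Real.log a - 1)
            - (Real.log a/(1-a) - Real.log a + 1)) := by ring
      _ = (Real.pi * c / 2) * (2 * kfun (2*t)) := by rw [hAB]
      _ = (Real.pi * c) * kfun (2*t) := by ring
      _ = (V^2/(4*Real.pi)) * kfun (2*t) := by rw [hpc]

end AuxProofs

/-- Explicit strict convexity of `J` along the geodesic ray on `ℙ¹`: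
`(d²/dt²)J(φ_t) = (V/2π)² ∫_ℂ 8e^{4t}|z|²/(1+e^{4t}|z|²)² · i dz∧dz̄/(1+|z|²)² > 0`,
and the asymptotic slope is `lim_{t→∞} (d/dt)J(φ_t) = V²/(2π)`. -/
theorem Jray_second_derivative_and_asymptotic_slope (V : ℝ) (hV : 0 < V) :
    (∀ t : ℝ, deriv (deriv (Jray V)) t =
      (V / (2 * Real.pi)) ^ 2 *
        ∫ z : ℂ, (8 * Real.exp (4 * t) * Complex.normSq z /
            (1 + Real.exp (4 * t) * Complex.normSq z) ^ 2) *
          (2 / (1 + Complex.normSq z) ^ 2)) ∧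
    (∀ t : ℝ, 0 < deriv (deriv (Jray V)) t) ∧
    Tendsto (deriv (Jray V)) atTop (nhds (V ^ 2 / (2 * Real.pi))) := by
  have hpi := Real.pi_ne_zero
  have hpip := Real.pi_pos
  have hJfun : Jray V = fun t => (V^2/(4*Real.pi)) * kfun (2*t) := funext (Jray_eq V)
  have hk : ∀ x, HasDerivAt kfun (k1fun x) x := by
    intro x
    rcases eq_or_ne x 0 with rfl | hx
    · rw [k1fun_zero]
      exact k_hasDeriv_zero
    · exact k_hasDeriv_ne x hx
  have hderiv1 : deriv (Jray V) = fun t => (V^2/(2*Real.pi)) * k1fun (2*t) := by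
    funext t
    have h2t : HasDerivAt (fun t : ℝ => 2*t) 2 t := by simpa using (hasDerivAt_id t).const_mul 2
    have hcomp : HasDerivAt (fun t : ℝ => kfun (2*t)) (k1fun (2*t) * 2) t := (hk (2*t)).comp t h2t
    have hJ : HasDerivAt (Jray V) ((V^2/(4*Real.pi)) * (k1fun (2*t) * 2)) t := by
      rw [hJfun]
      exact hcomp.const_mul _
    rw [hJ.deriv]
    field_simp
    ring
  have hk1d : ∀ t : ℝ, t ≠ 0 → HasDerivAt (fun t : ℝ => (V^2/(2*Real.pi)) * k1fun (2*t))
      ((V^2/(2*Real.pi)) * (2*(2*t*Real.cosh (2*t) - Real.sinh (2*t))/Real.sinh (2*t)^3 * 2)) t := by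
    intro t ht
    have h2t : HasDerivAt (fun t : ℝ => 2*t) 2 t := by simpa using (hasDerivAt_id t).const_mul 2
    exact ((k1_hasDeriv_ne (2*t) (mul_ne_zero two_ne_zero ht)).comp t h2t).const_mul _
  have hk1d0 : HasDerivAt (fun t : ℝ => (V^2/(2*Real.pi)) * k1fun (2*t))
      ((V^2/(2*Real.pi)) * (2/3 * 2)) 0 := by
    have h2t : HasDerivAt (fun t : ℝ => 2*t) 2 (0:ℝ) := by
      simpa using (hasDerivAt_id (0:ℝ)).const_mul 2
    have h0 : HasDerivAt k1fun (2/3 : ℝ) (2*(0:ℝ)) := by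
      rw [mul_zero]
      exact k1_hasDeriv_zero
    exact (h0.comp 0 h2t).const_mul _
  have hD2 : ∀ t : ℝ, t ≠ 0 → deriv (deriv (Jray V)) t
      = (V^2/(2*Real.pi)) * (2*(2*t*Real.cosh (2*t) - Real.sinh (2*t))/Real.sinh (2*t)^3 * 2) := by
    intro t ht
    rw [hderiv1]
    exact (hk1d t ht).deriv
  have hD20 : deriv (deriv (Jray V)) 0 = (V^2/(2*Real.pi)) * (2/3 * 2) := by
    rw [hderiv1]
    exact hk1d0.deriv
  refine ⟨?_, ?_, ?_⟩
  · intro t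
    rcases eq_or_ne t 0 with rfl | ht
    · have hr : (∫ z : ℂ, (8 * Real.exp (4 * (0:ℝ)) * Complex.normSq z /
            (1 + Real.exp (4 * (0:ℝ)) * Complex.normSq z) ^ 2) *
          (2 / (1 + Complex.normSq z) ^ 2))
          = Real.pi * ∫ s in Set.Ioi (0:ℝ),
            (8 * Real.exp (4 * (0:ℝ)) * s / (1 + Real.exp (4 * (0:ℝ)) * s) ^ 2) * (2/(1+s)^2) :=
        integral_complex_radial (fun s : ℝ =>
          (8 * Real.exp (4 * (0:ℝ)) * s / (1 + Real.exp (4 * (0:ℝ)) * s) ^ 2) * (2/(1+s)^2))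
      rw [hD20, hr]
      have he0 : Real.exp (4 * (0:ℝ)) = 1 := by norm_num
      rw [he0]
      rw [intC1]
      field_simp
      ring
    · set a := Real.exp (4*t) with ha
      have ha0 : 0 < a := Real.exp_pos _
      have hane : a ≠ 1 := by
        rw [ha, Ne, Real.exp_eq_one_iff]
        intro h
        exact ht (by linarith)
      have ha1 : a - 1 ≠ 0 := sub_ne_zero.2 hane
      have hL : Real.log a = 4*t := by rw [ha, Real.log_exp]
      have hs3 : Real.sinh (2*t) ≠ 0 := Real.sinh_ne_zero.2 (mul_ne_zero two_ne_zero ht)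
      have hr : (∫ z : ℂ, (8 * a * Complex.normSq z / (1 + a * Complex.normSq z) ^ 2) *
          (2 / (1 + Complex.normSq z) ^ 2))
          = Real.pi * ∫ s in Set.Ioi (0:ℝ), (8*a*s/(1+a*s)^2) * (2/(1+s)^2) :=
        integral_complex_radial (fun s : ℝ => (8*a*s/(1+a*s)^2) * (2/(1+s)^2))
      rw [hD2 t ht, hr, intC ha0 hane, hL]
      have hid := idC (2*t) (mul_ne_zero two_ne_zero ht)
      rw [show (2:ℝ)*(2*t) = 4*t by ring, ← ha] at hid
      rw [show 16*a*((a+1)*(4*t) - 2*(a-1))/(a-1)^3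
          = 8*(2*t*Real.cosh (2*t) - Real.sinh (2*t))/Real.sinh (2*t)^3 from hid]
      field_simp
      ring
  · intro t
    rcases eq_or_ne t 0 with rfl | ht
    · rw [hD20]
      positivity
    · rw [hD2 t ht]
      have hpos : 0 < (2*t*Real.cosh (2*t) - Real.sinh (2*t))/Real.sinh (2*t)^3 := by
        rcases ht.lt_or_gt with hneg | hposi
        · have hx : 2*t < 0 := by linarith
          have hnum : 2*t*Real.cosh (2*t) - Real.sinh (2*t) < 0 := by
            have := L2strict (-(2*t)) (by linarith)
            rw [Real.sinh_neg, Real.cosh_neg] at this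
            nlinarith
          have hsn : Real.sinh (2*t) < 0 := Real.sinh_neg_iff.2 hx
          have hden : Real.sinh (2*t)^3 < 0 := by
            rw [show (3:ℕ) = 2+1 from rfl, pow_succ]
            exact mul_neg_of_pos_of_neg (pow_two_pos_of_ne_zero (ne_of_lt hsn)) hsn
          exact div_pos_of_neg_of_neg hnum hden
        · have hx : 0 < 2*t := by linarith
          have hnum : 0 < 2*t*Real.cosh (2*t) - Real.sinh (2*t) := by
            have := L2strict (2*t) hx
            linarith
          have hden : 0 < Real.sinh (2*t)^3 := pow_pos (Real.sinh_pos_iff.2 hx) 3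
          exact div_pos hnum hden
      have he : (V^2/(2*Real.pi)) * (2*(2*t*Real.cosh (2*t) - Real.sinh (2*t))/Real.sinh (2*t)^3 * 2)
          = 4*(V^2/(2*Real.pi)) * ((2*t*Real.cosh (2*t) - Real.sinh (2*t))/Real.sinh (2*t)^3) := by
        ring
      rw [he]
      have : (0:ℝ) < 4*(V^2/(2*Real.pi)) := by positivity
      exact mul_pos this hpos
  · rw [hderiv1]
    have h2 : Tendsto (fun t : ℝ => 2*t) atTop atTop := tendsto_id.const_mul_atTop two_pos
    have := (k1fun_tendsto_one.comp h2).const_mul (V^2/(2*Real.pi))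
    rw [mul_one] at this
    apply this.congr
    intro t
    simp [Function.comp]
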